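/- arXiv:2510.09002 — 2 statements merged into one kernel-verified Lean document; each statement's English description precedes it below -/
import Mathlib

section
/- Let G be a connected graph with nonnegative edge lengths whose total edge length is at most h, and let β ≥ 1. Then the vertex set of G can be partitioned into at most O(β) parts such that each part induces a subgraph of (weak) diameter at most h/β, i.e., any two vertices of the same part are at distance at most h/β in that part's induced subgraph. -/
open SimpleGraph Finset
set_option linter.unusedSectionVars false
set_option linter.unusedVariables false

namespace Stmt3Aux

variable {V : Type*} [Fintype V] [DecidableEq V] (G : SimpleGraph V) [DecidableRel G.Adj]
  (l : Sym2 V → ℝ)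

/-- Sum of edge lengths along a walk. -/
def wsum {u v : V} (p : G.Walk u v) : ℝ := (p.edges.map l).sum

lemma nodup_subset_sum_le (hl : ∀ e, 0 ≤ l e) {l₁ l₂ : List (Sym2 V)} (h1 : l₁.Nodup)
    (h2 : ∀ e ∈ l₁, e ∈ l₂) : (l₁.map l).sum ≤ (l₂.map l).sum := by
  have e1 : (l₁.map l).sum = l₁.toFinset.sum l := (List.sum_toFinset l h1).symm
  have e2 : ∀ t : List (Sym2 V), t.toFinset.sum l ≤ (t.map l).sum := by
    intro t
    induction t with
    | nil => simp
    | cons a t ih =>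
      simp only [List.toFinset_cons, List.map_cons, List.sum_cons]
      by_cases ha : a ∈ t.toFinset
      · rw [Finset.insert_eq_self.2 ha]
        linarith [hl a]
      · rw [Finset.sum_insert ha]
        linarith
  calc (l₁.map l).sum = l₁.toFinset.sum l := e1
    _ ≤ l₂.toFinset.sum l := Finset.sum_le_sum_of_subset_of_nonneg
        (fun e he => List.mem_toFinset.2 (h2 e (List.mem_toFinset.1 he)))
        (fun e _ _ => hl e)
    _ ≤ (l₂.map l).sum := e2 l₂

variable (hG : G.Connected)

/-- Weighted distance: minimum length of a path between two vertices. -/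
noncomputable def wdist (u v : V) : ℝ :=
  (Finset.image (fun p : G.Path u v => wsum G l p.1) Finset.univ).min'
    (by
      obtain ⟨w⟩ := hG.preconnected u v
      exact Finset.image_nonempty.2 ⟨(⟨w.bypass, w.bypass_isPath⟩ : G.Path u v), mem_univ _⟩)

lemma exists_wdist_path (u v : V) :
    ∃ p : G.Path u v, wsum G l (p : G.Walk u v) = wdist G l hG u v := by
  have hne : (Finset.image (fun p : G.Path u v => wsum G l p.1) Finset.univ).Nonempty := by
    obtain ⟨w⟩ := hG.preconnected u v
    exact Finset.image_nonempty.2 ⟨(⟨w.bypass, w.bypass_isPath⟩ : G.Path u v), mem_univ _⟩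
  obtain ⟨p, -, hp⟩ := Finset.mem_image.1 (Finset.min'_mem _ hne)
  exact ⟨p, hp⟩

lemma wdist_le_path (u v : V) (p : G.Path u v) :
    wdist G l hG u v ≤ wsum G l (p : G.Walk u v) :=
  Finset.min'_le _ _ (Finset.mem_image_of_mem _ (mem_univ p))

lemma wdist_le_walk (hl : ∀ e, 0 ≤ l e) {u v : V} (w : G.Walk u v) :
    wdist G l hG u v ≤ wsum G l w :=
  le_trans (wdist_le_path G l hG u v ⟨w.bypass, w.bypass_isPath⟩)
    (nodup_subset_sum_le l hl (w.bypass_isPath.isTrail.edges_nodup)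
      (fun e he => w.edges_bypass_subset he))

lemma wdist_nonneg (hl : ∀ e, 0 ≤ l e) (u v : V) : 0 ≤ wdist G l hG u v := by
  obtain ⟨p, hp⟩ := exists_wdist_path G l hG u v
  rw [← hp]
  exact List.sum_nonneg (fun x hx => by
    obtain ⟨e, -, rfl⟩ := List.mem_map.1 hx
    exact hl e)

lemma wdist_self (hl : ∀ e, 0 ≤ l e) (u : V) : wdist G l hG u u = 0 :=
  le_antisymm (by simpa [wsum] using wdist_le_walk G l hG hl (Walk.nil : G.Walk u u))
    (wdist_nonneg G l hG hl u u)

lemma wsum_reverse {u v : V} (p : G.Walk u v) : wsum G l p.reverse = wsum G l p := by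
  simp [wsum, Walk.edges_reverse, List.map_reverse, List.sum_reverse]

lemma wsum_append {u v w : V} (p : G.Walk u v) (q : G.Walk v w) :
    wsum G l (p.append q) = wsum G l p + wsum G l q := by
  simp [wsum, Walk.edges_append]

lemma wdist_symm (hl : ∀ e, 0 ≤ l e) (u v : V) : wdist G l hG u v = wdist G l hG v u := by
  have key : ∀ a b : V, wdist G l hG a b ≤ wdist G l hG b a := by
    intro a b
    obtain ⟨p, hp⟩ := exists_wdist_path G l hG b a
    calc wdist G l hG a b ≤ wsum G l (p : G.Walk b a).reverse := wdist_le_walk G l hG hl _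
      _ = wsum G l (p : G.Walk b a) := wsum_reverse G l _
      _ = wdist G l hG b a := hp
  exact le_antisymm (key u v) (key v u)

lemma wdist_triangle (hl : ∀ e, 0 ≤ l e) (u v w : V) :
    wdist G l hG u w ≤ wdist G l hG u v + wdist G l hG v w := by
  obtain ⟨p, hp⟩ := exists_wdist_path G l hG u v
  obtain ⟨q, hq⟩ := exists_wdist_path G l hG v w
  calc wdist G l hG u w ≤ wsum G l ((p : G.Walk u v).append (q : G.Walk v w)) :=
        wdist_le_walk G l hG hl _
    _ = wsum G l (p : G.Walk u v) + wsum G l (q : G.Walk v w) := wsum_append G l _ _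
    _ = _ := by rw [hp, hq]

lemma wdist_le_adj (hl : ∀ e, 0 ≤ l e) {u v : V} (h : G.Adj u v) :
    wdist G l hG u v ≤ l s(u, v) := by
  simpa [wsum] using wdist_le_walk G l hG hl (Walk.cons h Walk.nil)

lemma wdist_split (hl : ∀ e, 0 ≤ l e) {c u : V} (p : G.Walk c u) {x : V}
    (hx : x ∈ p.support) :
    wdist G l hG c x + wdist G l hG x u ≤ wsum G l p := by
  calc wdist G l hG c x + wdist G l hG x u
      ≤ wsum G l (p.takeUntil x hx) + wsum G l (p.dropUntil x hx) :=
        add_le_add (wdist_le_walk G l hG hl _) (wdist_le_walk G l hG hl _)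
    _ = wsum G l ((p.takeUntil x hx).append (p.dropUntil x hx)) := (wsum_append G l _ _).symm
    _ = wsum G l p := by rw [p.take_spec hx]

/-- The min of the distances from `c` to the two endpoints of an edge. -/
noncomputable def mC (c : V) (e : Sym2 V) : ℝ :=
  Sym2.lift ⟨fun x y => min (wdist G l hG c x) (wdist G l hG c y),
    fun x y => min_comm _ _⟩ e

lemma mC_mk (c x y : V) : mC G l hG c s(x, y) = min (wdist G l hG c x) (wdist G l hG c y) := rfl

/-- Truncated charge of an edge to a center. -/
noncomputable def fC (ρ : ℝ) (c : V) (e : Sym2 V) : ℝ :=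
  min (l e) (max 0 (ρ - mC G l hG c e))

lemma fC_nonneg (hl : ∀ e, 0 ≤ l e) (ρ : ℝ) (c : V) (e : Sym2 V) : 0 ≤ fC G l hG ρ c e :=
  le_min (hl e) (le_max_left _ _)

lemma fC_le (ρ : ℝ) (c : V) (e : Sym2 V) : fC G l hG ρ c e ≤ l e := min_le_left _ _

lemma fC_eq_zero (hl : ∀ e, 0 ≤ l e) {ρ : ℝ} {c : V} {e : Sym2 V}
    (h : ρ ≤ mC G l hG c e) : fC G l hG ρ c e = 0 := by
  rw [fC, max_eq_left (by linarith), min_eq_right (hl e)]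

lemma fC_le_of_lt {ρ : ℝ} {c : V} {e : Sym2 V} (h : mC G l hG c e < ρ) :
    fC G l hG ρ c e ≤ ρ - mC G l hG c e := by
  rw [fC]
  exact le_trans (min_le_right _ _) (by rw [max_eq_right (by linarith)])

lemma fC_step (hl : ∀ e, 0 ≤ l e) (ρ : ℝ) (c : V) {x y : V} (hxy : G.Adj x y) :
    min (wdist G l hG c y) ρ - min (wdist G l hG c x) ρ ≤ fC G l hG ρ c s(x, y) := by
  set dx := wdist G l hG c x with hdx
  set dy := wdist G l hG c y with hdy
  set L := l s(x, y) with hL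
  have hL0 : 0 ≤ L := hl _
  have htri : dy ≤ dx + L :=
    le_trans (wdist_triangle G l hG hl c x y) (by linarith [wdist_le_adj G l hG hl hxy])
  by_cases hx : ρ ≤ dx
  · have h1 : min dy ρ ≤ ρ := min_le_right _ _
    have h2 : min dx ρ = ρ := min_eq_right hx
    have h3 : 0 ≤ fC G l hG ρ c s(x, y) := fC_nonneg G l hG hl ρ c _
    linarith
  · push_neg at hx
    have h3 : min dx ρ = dx := min_eq_left hx.le
    have hmlt : mC G l hG c s(x, y) ≤ dx := by rw [mC_mk]; exact min_le_left _ _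
    have h4 : min L (ρ - dx) ≤ fC G l hG ρ c s(x, y) := by
      rw [fC]
      refine min_le_min le_rfl ?_
      calc ρ - dx ≤ ρ - mC G l hG c s(x, y) := by linarith
        _ ≤ max 0 (ρ - mC G l hG c s(x, y)) := le_max_right _ _
    rcases le_total L (ρ - dx) with hc | hc
    · have : min L (ρ - dx) = L := min_eq_left hc
      have h5 : min dy ρ ≤ dy := min_le_left _ _
      linarith
    · have : min L (ρ - dx) = ρ - dx := min_eq_right hc
      have h5 : min dy ρ ≤ ρ := min_le_right _ _
      linarith

lemma fC_walk (hl : ∀ e, 0 ≤ l e) (ρ : ℝ) (c : V) {x y : V} (w : G.Walk x y) :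
    min (wdist G l hG c y) ρ - min (wdist G l hG c x) ρ ≤ (w.edges.map (fC G l hG ρ c)).sum := by
  induction w with
  | nil => simp
  | cons h p ih =>
    simp only [Walk.edges_cons, List.map_cons, List.sum_cons]
    have := fC_step G l hG hl ρ c h
    linarith

lemma fC_total (hl : ∀ e, 0 ≤ l e) {ρ : ℝ} (hρ : 0 ≤ ρ) {c c' : V}
    (hcc : ρ ≤ wdist G l hG c c') :
    ρ ≤ ∑ e ∈ G.edgeFinset, fC G l hG ρ c e := by
  obtain ⟨w⟩ := hG.preconnected c c'
  set p := w.bypass with hp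
  have hnd : p.edges.Nodup := w.bypass_isPath.isTrail.edges_nodup
  have h1 : min (wdist G l hG c c') ρ - min (wdist G l hG c c) ρ
      ≤ (p.edges.map (fC G l hG ρ c)).sum := fC_walk G l hG hl ρ c p
  rw [wdist_self G l hG hl, min_eq_left hρ, min_eq_right hcc, sub_zero] at h1
  have h2 : (p.edges.map (fC G l hG ρ c)).sum = p.edges.toFinset.sum (fC G l hG ρ c) :=
    (List.sum_toFinset _ hnd).symm
  have h3 : p.edges.toFinset ⊆ G.edgeFinset := by
    intro e he
    exact mem_edgeFinset.2 (p.edges_subset_edgeSet (List.mem_toFinset.1 he))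
  have h4 : p.edges.toFinset.sum (fC G l hG ρ c) ≤ ∑ e ∈ G.edgeFinset, fC G l hG ρ c e :=
    Finset.sum_le_sum_of_subset_of_nonneg h3 (fun e _ _ => fC_nonneg G l hG hl ρ c e)
  linarith

end Stmt3Aux


open Stmt3Aux

/-- A connected graph with nonnegative edge lengths of total length at most `h`
admits a partition of its vertices into at most `8β` parts, each of which induces a subgraph
of weak diameter at most `h/β`: any two vertices of the same part are joined by a walk
staying inside the part of total length at most `h/β`. -/
theorem stmt3 {V : Type*} [Fintype V] [DecidableEq V]
    (G : SimpleGraph V) [DecidableRel G.Adj] (hG : G.Connected)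
    (l : Sym2 V → ℝ) (hl : ∀ e, 0 ≤ l e)
    (h β : ℝ) (hh : 0 < h) (hβ : 1 ≤ β)
    (hsum : ∑ e ∈ G.edgeFinset, l e ≤ h) :
    ∃ P : Finpartition (Finset.univ : Finset V),
      (P.parts.card : ℝ) ≤ 8 * β ∧
      ∀ part ∈ P.parts, ∀ u ∈ part, ∀ v ∈ part,
        ∃ p : G.Walk u v, (∀ x ∈ p.support, x ∈ part) ∧
          (p.edges.map l).sum ≤ h / β := by
  classical
  have hβ0 : (0:ℝ) < β := lt_of_lt_of_le one_pos hβ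
  rcases isEmpty_or_nonempty V with hV | hV
  · refine ⟨Finpartition.ofSetoid (⊤ : Setoid V), ?_, ?_⟩
    · have h1 := Finpartition.card_parts_le_card
        (P := Finpartition.ofSetoid (⊤ : Setoid V))
      have h0 : (Finset.univ : Finset V).card = 0 := by simp
      rw [h0] at h1
      have : (Finpartition.ofSetoid (⊤ : Setoid V)).parts.card = 0 := by omega
      rw [this]
      push_cast
      linarith
    · intro part hpart u hu
      exact isEmptyElim u
  · obtain ⟨v0⟩ := hV
    set r : ℝ := h / (2*β) with hr
    have hr0 : 0 < r := by positivity
    have hdtri : ∀ u v w, wdist G l hG u w ≤ wdist G l hG u v + wdist G l hG v w :=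
      wdist_triangle G l hG hl
    have hdsymm : ∀ u v, wdist G l hG u v = wdist G l hG v u := wdist_symm G l hG hl
    have hdself : ∀ u, wdist G l hG u u = 0 := wdist_self G l hG hl
    -- a maximal `r`-separated set
    obtain ⟨S, hSmem, hSmax⟩ := Finset.exists_max_image
      ((Finset.univ : Finset V).powerset.filter
        (fun t : Finset V => (t : Set V).Pairwise fun a b => r < wdist G l hG a b))
      (fun t : Finset V => t.card) ⟨∅, by simp⟩
    have hSsep : (S : Set V).Pairwise fun a b => r < wdist G l hG a b :=
      (Finset.mem_filter.1 hSmem).2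
    have hScov : ∀ v : V, ∃ c ∈ S, wdist G l hG c v ≤ r := by
      intro v
      by_contra hcon
      push_neg at hcon
      have hvS : v ∉ S := fun hv => by
        have := hcon v hv
        rw [hdself] at this
        linarith
      have hsep' : ((insert v S : Finset V) : Set V).Pairwise
          fun a b => r < wdist G l hG a b := by
        intro a ha b hb hab
        simp only [Finset.coe_insert, Set.mem_insert_iff, Finset.mem_coe] at ha hb
        rcases ha with rfl | ha
        · rcases hb with rfl | hb
          · exact absurd rfl hab
          · rw [hdsymm]; exact hcon b hb
        · rcases hb with rfl | hb
          · exact hcon a ha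
          · exact hSsep ha hb hab
      have hmem : insert v S ∈ (Finset.univ : Finset V).powerset.filter
          (fun t : Finset V => (t : Set V).Pairwise fun a b => r < wdist G l hG a b) :=
        Finset.mem_filter.2 ⟨Finset.mem_powerset.2 (Finset.subset_univ _), hsep'⟩
      have hle := hSmax _ hmem
      rw [Finset.card_insert_of_notMem hvS] at hle
      omega
    -- nearest-center assignment with tie-breaking by a fixed enumeration
    set idx : V ≃ Fin (Fintype.card V) := Fintype.equivFin V with hidx
    set M : V → Finset V :=
      fun v => S.filter fun c => ∀ c' ∈ S, wdist G l hG c v ≤ wdist G l hG c' v with hM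
    have hMne : ∀ v, ((M v).image idx).Nonempty := by
      intro v
      obtain ⟨c0, hc0, -⟩ := hScov v
      obtain ⟨c, hc, hcmin⟩ := Finset.exists_min_image S (fun c => wdist G l hG c v) ⟨c0, hc0⟩
      exact Finset.image_nonempty.2 ⟨c, Finset.mem_filter.2 ⟨hc, hcmin⟩⟩
    set φ : V → V := fun v => idx.symm (((M v).image idx).min' (hMne v)) with hφ
    have hφM : ∀ v, φ v ∈ M v := by
      intro v
      obtain ⟨c, hc, hce⟩ := Finset.mem_image.1 (Finset.min'_mem _ (hMne v))
      have : φ v = c := by rw [hφ]; simp only [← hce, Equiv.symm_apply_apply]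
      rw [this]; exact hc
    have hφmin : ∀ v, ∀ c ∈ M v, idx (φ v) ≤ idx c := by
      intro v c hc
      have hval : idx (φ v) = ((M v).image idx).min' (hMne v) := by
        rw [hφ]; simp only [Equiv.apply_symm_apply]
      rw [hval]
      exact Finset.min'_le _ _ (Finset.mem_image_of_mem _ hc)
    have hφS : ∀ v, φ v ∈ S := fun v => (Finset.mem_filter.1 (hφM v)).1
    have hφle : ∀ v, ∀ c ∈ S, wdist G l hG (φ v) v ≤ wdist G l hG c v :=
      fun v => (Finset.mem_filter.1 (hφM v)).2
    have hφr : ∀ v, wdist G l hG (φ v) v ≤ r := by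
      intro v
      obtain ⟨c0, hc0, hc0r⟩ := hScov v
      exact le_trans (hφle v c0 hc0) hc0r
    have key : ∀ u z : V,
        wdist G l hG (φ u) z + wdist G l hG z u ≤ wdist G l hG (φ u) u → φ z = φ u := by
      intro u z hz
      have hcS := hφS u
      have hsub : M z ⊆ M u := by
        intro c'' hc''
        obtain ⟨hc''S, hc''min⟩ := Finset.mem_filter.1 hc''
        refine Finset.mem_filter.2 ⟨hc''S, fun c''' hc''' => ?_⟩
        have h1 : wdist G l hG c'' z ≤ wdist G l hG (φ u) z := hc''min _ hcS
        have h2 : wdist G l hG c'' u ≤ wdist G l hG c'' z + wdist G l hG z u := hdtri _ _ _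
        have h3 : wdist G l hG (φ u) u ≤ wdist G l hG c''' u := hφle u c''' hc'''
        linarith
      have hcMz : φ u ∈ M z := by
        refine Finset.mem_filter.2 ⟨hcS, fun c'' hc'' => ?_⟩
        have h2 : wdist G l hG c'' u ≤ wdist G l hG c'' z + wdist G l hG z u := hdtri _ _ _
        have h3 : wdist G l hG (φ u) u ≤ wdist G l hG c'' u := hφle u c'' hc''
        linarith
      have h4 : idx (φ z) ≤ idx (φ u) := hφmin z _ hcMz
      have h5 : idx (φ u) ≤ idx (φ z) := hφmin u _ (hsub (hφM z))
      exact idx.injective (le_antisymm h4 h5)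
    refine ⟨Finpartition.ofSetoid (Setoid.ker φ), ?_, ?_⟩
    · -- cardinality bound
      have hcard : (Finpartition.ofSetoid (Setoid.ker φ)).parts.card ≤ S.card := by
        refine Finset.card_le_card_of_injOn
          (fun t => if ht : t.Nonempty then φ ht.choose else v0) (fun t ht => ?_) ?_
        · have hnet := (Finpartition.ofSetoid (Setoid.ker φ)).nonempty_of_mem_parts ht
          show (if ht : t.Nonempty then φ ht.choose else v0) ∈ S
          rw [dif_pos hnet]
          exact hφS _
        · intro t1 ht1 t2 ht2 heq
          rw [Finset.mem_coe] at ht1 ht2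
          have hne1 := (Finpartition.ofSetoid (Setoid.ker φ)).nonempty_of_mem_parts ht1
          have hne2 := (Finpartition.ofSetoid (Setoid.ker φ)).nonempty_of_mem_parts ht2
          simp only [dif_pos hne1, dif_pos hne2] at heq
          have hx1 : hne1.choose ∈ t1 := hne1.choose_spec
          have hx2 : hne2.choose ∈ t2 := hne2.choose_spec
          have hpt : (Finpartition.ofSetoid (Setoid.ker φ)).part hne1.choose = t1 :=
            (Finpartition.ofSetoid (Setoid.ker φ)).part_eq_of_mem ht1 hx1
          have hmem2 : hne2.choose ∈ (Finpartition.ofSetoid (Setoid.ker φ)).part hne1.choose := by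
            rw [Finpartition.mem_part_ofSetoid_iff_rel]
            exact Setoid.ker_def.2 heq
          exact (Finpartition.ofSetoid (Setoid.ker φ)).eq_of_mem_parts ht1 ht2 (hpt ▸ hmem2) hx2
      rcases le_or_gt S.card 1 with hS1 | hS1
      · have h1 : ((Finpartition.ofSetoid (Setoid.ker φ)).parts.card : ℝ) ≤ 1 := by
          exact_mod_cast le_trans hcard hS1
        linarith
      · -- the charging argument: S.card ≤ 4β
        set ρ : ℝ := r/2 with hρdef
        have hρ0 : (0:ℝ) ≤ ρ := by positivity
        have claim1 : ∀ c ∈ S, ρ ≤ ∑ e ∈ G.edgeFinset, fC G l hG ρ c e := by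
          intro c hc
          obtain ⟨c', hc', hne⟩ := Finset.exists_mem_ne hS1 c
          have hsep := hSsep (Finset.mem_coe.2 hc) (Finset.mem_coe.2 hc') (Ne.symm hne)
          exact fC_total G l hG hl hρ0 (le_of_lt (lt_of_le_of_lt (by linarith) hsep))
        have hnear : ∀ z : V, ∀ c ∈ S, ∀ c' ∈ S,
            wdist G l hG c z < ρ → wdist G l hG c' z < ρ → c = c' := by
          intro z c hc c' hc' h1 h2
          by_contra hne
          have hsep := hSsep (Finset.mem_coe.2 hc) (Finset.mem_coe.2 hc') hne
          have htr : wdist G l hG c c' ≤ wdist G l hG c z + wdist G l hG z c' := hdtri _ _ _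
          have hsy : wdist G l hG z c' = wdist G l hG c' z := hdsymm _ _
          have : r = 2*ρ := by rw [hρdef]; ring
          linarith
        have claim2 : ∀ e ∈ G.edgeFinset, ∑ c ∈ S, fC G l hG ρ c e ≤ l e := by
          intro e
          refine Sym2.ind (fun x y => ?_) e
          intro he
          have hAdj : G.Adj x y := G.mem_edgeSet.1 (mem_edgeFinset.1 he)
          have hdxy : wdist G l hG x y ≤ l s(x,y) := wdist_le_adj G l hG hl hAdj
          set T := S.filter (fun c => 0 < fC G l hG ρ c s(x,y)) with hT
          have hTm : ∀ c ∈ T, mC G l hG c s(x,y) < ρ := by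
            intro c hc
            obtain ⟨-, hpos⟩ := Finset.mem_filter.1 hc
            by_contra hge
            push_neg at hge
            rw [fC_eq_zero G l hG hl hge] at hpos
            exact lt_irrefl 0 hpos
          have hsum0 : ∑ c ∈ S, fC G l hG ρ c s(x,y) = ∑ c ∈ T, fC G l hG ρ c s(x,y) := by
            rw [hT]
            rw [← Finset.sum_filter_add_sum_filter_not S
              (fun c => 0 < fC G l hG ρ c s(x,y)) (fC G l hG ρ · s(x,y))]
            have hz : ∑ c ∈ S.filter (fun c => ¬ 0 < fC G l hG ρ c s(x,y)),
                fC G l hG ρ c s(x,y) = 0 :=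
              Finset.sum_eq_zero (fun c hc =>
                le_antisymm (not_lt.1 (Finset.mem_filter.1 hc).2) (fC_nonneg G l hG hl ρ c _))
            rw [hz, add_zero]
          rw [hsum0]
          have hTcard : T.card ≤ 2 := by
            have hsub2 : T ⊆ S.filter (fun c => wdist G l hG c x < ρ) ∪
                S.filter (fun c => wdist G l hG c y < ρ) := by
              intro c hc
              obtain ⟨hcS, -⟩ := Finset.mem_filter.1 hc
              have hmin := hTm c hc
              rw [mC_mk, min_lt_iff] at hmin
              rcases hmin with hlt | hlt
              · exact Finset.mem_union_left _ (Finset.mem_filter.2 ⟨hcS, hlt⟩)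
              · exact Finset.mem_union_right _ (Finset.mem_filter.2 ⟨hcS, hlt⟩)
            have h1 : (S.filter (fun c => wdist G l hG c x < ρ)).card ≤ 1 :=
              Finset.card_le_one.2 (fun a ha b hb => by
                obtain ⟨haS, hax⟩ := Finset.mem_filter.1 ha
                obtain ⟨hbS, hbx⟩ := Finset.mem_filter.1 hb
                exact hnear x a haS b hbS hax hbx)
            have h2 : (S.filter (fun c => wdist G l hG c y < ρ)).card ≤ 1 :=
              Finset.card_le_one.2 (fun a ha b hb => by
                obtain ⟨haS, hax⟩ := Finset.mem_filter.1 ha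
                obtain ⟨hbS, hbx⟩ := Finset.mem_filter.1 hb
                exact hnear y a haS b hbS hax hbx)
            calc T.card ≤ _ := Finset.card_le_card hsub2
              _ ≤ _ + _ := Finset.card_union_le _ _
              _ ≤ 2 := by omega
          have hcases : T.card = 0 ∨ T.card = 1 ∨ T.card = 2 := by omega
          rcases hcases with h0 | h1' | h2'
          · rw [Finset.card_eq_zero.1 h0, Finset.sum_empty]
            exact hl _
          · obtain ⟨c, hc⟩ := Finset.card_eq_one.1 h1'
            rw [hc, Finset.sum_singleton]
            exact fC_le G l hG ρ c _
          · obtain ⟨c, c', hne, hcc⟩ := Finset.card_eq_two.1 h2'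
            rw [hcc, Finset.sum_pair hne]
            have hcT : c ∈ T := by rw [hcc]; exact Finset.mem_insert_self _ _
            have hc'T : c' ∈ T := by rw [hcc]; simp
            have hcS : c ∈ S := (Finset.mem_filter.1 hcT).1
            have hc'S : c' ∈ S := (Finset.mem_filter.1 hc'T).1
            have hm1 : min (wdist G l hG c x) (wdist G l hG c y) < ρ := by
              have := hTm c hcT; rwa [mC_mk] at this
            have hm2 : min (wdist G l hG c' x) (wdist G l hG c' y) < ρ := by
              have := hTm c' hc'T; rwa [mC_mk] at this
            have hb1 : fC G l hG ρ c s(x,y) ≤ ρ - min (wdist G l hG c x) (wdist G l hG c y) := by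
              have := fC_le_of_lt G l hG (c := c) (e := s(x,y)) (by rw [mC_mk]; exact hm1)
              rwa [mC_mk] at this
            have hb2 : fC G l hG ρ c' s(x,y) ≤ ρ - min (wdist G l hG c' x) (wdist G l hG c' y) := by
              have := fC_le_of_lt G l hG (c := c') (e := s(x,y)) (by rw [mC_mk]; exact hm2)
              rwa [mC_mk] at this
            have hsepcc : r < wdist G l hG c c' := hSsep hcS hc'S hne
            have t1 : wdist G l hG c c' ≤ wdist G l hG c x + l s(x,y) + wdist G l hG c' y := by
              have e0 : wdist G l hG c c' ≤ wdist G l hG c x + wdist G l hG x c' := hdtri _ _ _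
              have e1 : wdist G l hG x c' ≤ wdist G l hG x y + wdist G l hG y c' := hdtri _ _ _
              have e2 : wdist G l hG y c' = wdist G l hG c' y := hdsymm _ _
              linarith
            have t2 : wdist G l hG c c' ≤ wdist G l hG c y + l s(x,y) + wdist G l hG c' x := by
              have e0 : wdist G l hG c c' ≤ wdist G l hG c y + wdist G l hG y c' := hdtri _ _ _
              have e1 : wdist G l hG y c' ≤ wdist G l hG y x + wdist G l hG x c' := hdtri _ _ _
              have e2 : wdist G l hG x c' = wdist G l hG c' x := hdsymm _ _
              have e3 : wdist G l hG y x = wdist G l hG x y := hdsymm _ _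
              linarith
            have n1 : ¬(wdist G l hG c x < ρ ∧ wdist G l hG c' x < ρ) :=
              fun hp => hne (hnear x c hcS c' hc'S hp.1 hp.2)
            have n2 : ¬(wdist G l hG c y < ρ ∧ wdist G l hG c' y < ρ) :=
              fun hp => hne (hnear y c hcS c' hc'S hp.1 hp.2)
            have hρr : r = 2*ρ := by rw [hρdef]; ring
            rcases le_total (wdist G l hG c x) (wdist G l hG c y) with p1 | p1
            · rw [min_eq_left p1] at hm1 hb1
              rcases le_total (wdist G l hG c' x) (wdist G l hG c' y) with p2 | p2
              · rw [min_eq_left p2] at hm2 hb2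
                exact absurd ⟨hm1, hm2⟩ n1
              · rw [min_eq_right p2] at hm2 hb2
                linarith
            · rw [min_eq_right p1] at hm1 hb1
              rcases le_total (wdist G l hG c' x) (wdist G l hG c' y) with p2 | p2
              · rw [min_eq_left p2] at hm2 hb2
                linarith
              · rw [min_eq_right p2] at hm2 hb2
                exact absurd ⟨hm1, hm2⟩ n2
        have hswap : ∑ c ∈ S, ∑ e ∈ G.edgeFinset, fC G l hG ρ c e ≤ h := by
          rw [Finset.sum_comm]
          calc ∑ e ∈ G.edgeFinset, ∑ c ∈ S, fC G l hG ρ c e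
              ≤ ∑ e ∈ G.edgeFinset, l e := Finset.sum_le_sum claim2
            _ ≤ h := hsum
        have hlow : (S.card : ℝ) * ρ ≤ ∑ c ∈ S, ∑ e ∈ G.edgeFinset, fC G l hG ρ c e := by
          have hsge := Finset.sum_le_sum claim1
          simpa [Finset.sum_const, nsmul_eq_mul] using hsge
        have hkey : (S.card : ℝ) * ρ ≤ h := le_trans hlow hswap
        have hρval : ρ = h/(4*β) := by rw [hρdef, hr]; ring
        have hcard4 : (S.card : ℝ) ≤ 4*β := by
          rw [hρval] at hkey
          have h4β : (0:ℝ) < 4*β := by linarith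
          rw [mul_div_assoc', div_le_iff₀ h4β] at hkey
          nlinarith
        have : ((Finpartition.ofSetoid (Setoid.ker φ)).parts.card : ℝ) ≤ (S.card : ℝ) := by
          exact_mod_cast hcard
        linarith
    · -- the diameter bound
      intro part hpart u hu v hv
      have hupart : (Finpartition.ofSetoid (Setoid.ker φ)).part u = part :=
        (Finpartition.ofSetoid (Setoid.ker φ)).part_eq_of_mem hpart hu
      have hrel : φ u = φ v := by
        have hv' : v ∈ (Finpartition.ofSetoid (Setoid.ker φ)).part u := hupart ▸ hv
        rw [Finpartition.mem_part_ofSetoid_iff_rel] at hv'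
        exact Setoid.ker_def.1 hv'
      obtain ⟨p, hpsum⟩ := exists_wdist_path G l hG (φ u) u
      obtain ⟨q, hqsum⟩ := exists_wdist_path G l hG (φ u) v
      refine ⟨p.1.reverse.append q.1, ?_, ?_⟩
      · intro z hz
        rw [Walk.mem_support_append_iff] at hz
        have hz' : z ∈ p.1.support ∨ z ∈ q.1.support := by
          rcases hz with hz | hz
          · left; rwa [Walk.support_reverse, List.mem_reverse] at hz
          · right; exact hz
        have hφz : φ z = φ u := by
          rcases hz' with hz1 | hz1
          · refine key u z ?_
            have hs := wdist_split G l hG hl p.1 hz1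
            rw [hpsum] at hs
            exact hs
          · have hzv : φ z = φ v := by
              refine key v z ?_
              have hs := wdist_split G l hG hl q.1 hz1
              rw [hqsum] at hs
              rw [← hrel]
              exact hs
            rw [hzv, ← hrel]
        rw [← hupart]
        rw [Finpartition.mem_part_ofSetoid_iff_rel]
        exact Setoid.ker_def.2 hφz.symm
      · show wsum G l (p.1.reverse.append q.1) ≤ h / β
        have hs : wsum G l (p.1.reverse.append q.1)
            = wdist G l hG (φ u) u + wdist G l hG (φ u) v := by
          rw [wsum_append, wsum_reverse, hpsum, hqsum]
        have h1 : wdist G l hG (φ u) u ≤ r := hφr u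
        have h2 : wdist G l hG (φ u) v ≤ r := by rw [hrel]; exact hφr v
        have hrr : r + r = h/β := by
          rw [hr]
          field_simp
          ring
        rw [hs]
        linarith
end

section
/- The group Steiner tree to length-constrained MST reduction is exact: given a group Steiner instance on graph F with root r and disjoint groups g_1,…,g_k, construct G by (a) attaching to each group vertex v a copy v′ via a length-h weight-0 edge, (b) adding weight-0 length-0 clique edges among all copies of the same group, (c) adding a length-h weight-0 edge from r to every original vertex, (d) keeping each edge of F with its original weight and length 0. Then a spanning tree of G in which every vertex is at distance at most h from r yields, by intersecting with E(F), a subgraph of F connecting r to at least one vertex of every group with the same weight; and conversely every group Steiner solution extends to a feasible h-length spanning tree of G of the same weight. -/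
open SimpleGraph

/-- Edges of the graph `G` constructed in the reduction from group Steiner tree on `F`:
`fe e` is an original edge of `F` (weight kept, length 0), `pull v` is the length-`h`
weight-0 edge from a group vertex `v` to its copy, `clique a b` is a length-0 weight-0
edge between two copies of vertices of the same group, and `span v` is the length-`h`
weight-0 edge from the root to an original vertex `v ≠ r`. -/
inductive RedEdge (V : Type*) where
  | fe (e : Sym2 V)
  | pull (v : V)
  | clique (a b : V)
  | span (v : V)

/-- `v` belongs to some group. -/
def InGroup {V : Type*} {k : ℕ} (g : Fin k → Finset V) (v : V) : Prop := ∃ i, v ∈ g i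

instance {V : Type*} {k : ℕ} [DecidableEq V] (g : Fin k → Finset V) :
    DecidablePred (InGroup g) := fun _ => by unfold InGroup; infer_instance

/-- Vertices of the constructed graph: the original vertices plus a copy of each group
vertex. -/
abbrev RedVert {V : Type*} {k : ℕ} (g : Fin k → Finset V) := V ⊕ {v : V // InGroup g v}

/-- Incidence of the multigraph edges of the constructed graph: `RedStep F r g e x y`
says the edge `e` joins the vertices `x` and `y`. -/
def RedStep {V : Type*} {k : ℕ} (F : SimpleGraph V) (r : V) (g : Fin k → Finset V) :
    RedEdge V → RedVert g → RedVert g → Prop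
  | RedEdge.fe e, x, y => ∃ u v, F.Adj u v ∧ e = s(u, v) ∧ x = Sum.inl u ∧ y = Sum.inl v
  | RedEdge.pull v, x, y => ∃ hv : InGroup g v,
      (x = Sum.inl v ∧ y = Sum.inr ⟨v, hv⟩) ∨ (x = Sum.inr ⟨v, hv⟩ ∧ y = Sum.inl v)
  | RedEdge.clique a b, x, y => a ≠ b ∧ (∃ i, a ∈ g i ∧ b ∈ g i) ∧
      ∃ (ha : InGroup g a) (hb : InGroup g b),
        (x = Sum.inr ⟨a, ha⟩ ∧ y = Sum.inr ⟨b, hb⟩) ∨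
        (x = Sum.inr ⟨b, hb⟩ ∧ y = Sum.inr ⟨a, ha⟩)
  | RedEdge.span v, x, y => v ≠ r ∧
      ((x = Sum.inl r ∧ y = Sum.inl v) ∨ (x = Sum.inl v ∧ y = Sum.inl r))

/-- Edge lengths of the constructed graph. -/
def redLen {V : Type*} (h : ℝ) : RedEdge V → ℝ
  | RedEdge.fe _ => 0
  | RedEdge.pull _ => h
  | RedEdge.clique _ _ => 0
  | RedEdge.span _ => h

/-- Edge weights of the constructed graph. -/
def redWt {V : Type*} (wF : Sym2 V → ℝ) : RedEdge V → ℝ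
  | RedEdge.fe e => wF e
  | RedEdge.pull _ => 0
  | RedEdge.clique _ _ => 0
  | RedEdge.span _ => 0

/-- Walks in the constructed multigraph using only edges of `T`, recorded as the list of
traversed edges. -/
inductive RedWalk {V : Type*} {k : ℕ} (F : SimpleGraph V) (r : V) (g : Fin k → Finset V)
    (T : Finset (RedEdge V)) : RedVert g → RedVert g → List (RedEdge V) → Prop
  | nil (x : RedVert g) : RedWalk F r g T x x []
  | cons {x z y : RedVert g} {e : RedEdge V} {es : List (RedEdge V)} :
      e ∈ T → RedStep F r g e x z → RedWalk F r g T z y es →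
      RedWalk F r g T x y (e :: es)

section Aux

variable {V : Type*} {k : ℕ} {F : SimpleGraph V} {r : V} {g : Fin k → Finset V}
  {T : Finset (RedEdge V)}

lemma redwalk_nil_eq {x y : RedVert g} (hw : RedWalk F r g T x y []) : x = y := by
  cases hw; rfl

lemma redwalk_concat {x y : RedVert g} {L : List (RedEdge V)}
    (hw : RedWalk F r g T x y L) (hL : L ≠ []) :
    ∃ z e L', L = L' ++ [e] ∧ RedWalk F r g T x z L' ∧ e ∈ T ∧ RedStep F r g e z y := by
  induction hw with
  | nil => exact absurd rfl hL
  | cons he hs hrest ih =>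
    rename_i x z y e es
    rcases es with _ | ⟨e', es'⟩
    · have hzy := redwalk_nil_eq hrest
      subst hzy
      exact ⟨x, e, [], rfl, RedWalk.nil x, he, hs⟩
    · obtain ⟨z', e'', L'', heq, hw', he'', hs''⟩ := ih (by simp)
      exact ⟨z', e'', e :: L'', by rw [heq]; rfl, RedWalk.cons he hs hw', he'', hs''⟩

lemma redwalk_append {x y z : RedVert g} {L1 L2 : List (RedEdge V)}
    (h1 : RedWalk F r g T x y L1) (h2 : RedWalk F r g T y z L2) :
    RedWalk F r g T x z (L1 ++ L2) := by
  induction h1 with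
  | nil => exact h2
  | cons he hs _ ih => exact RedWalk.cons he hs (ih h2)

lemma redstep_pair {e : RedEdge V} {x y x' y' : RedVert g}
    (h1 : RedStep F r g e x y) (h2 : RedStep F r g e x' y') :
    (x' = x ∧ y' = y) ∨ (x' = y ∧ y' = x) := by
  cases e with
  | fe e0 =>
    obtain ⟨u, v, _, he, hx, hy⟩ := h1
    obtain ⟨u', v', _, he', hx', hy'⟩ := h2
    subst hx hy hx' hy'
    rw [he] at he'
    rcases Sym2.eq_iff.mp he'.symm with ⟨rfl, rfl⟩ | ⟨rfl, rfl⟩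
    · exact Or.inl ⟨rfl, rfl⟩
    · exact Or.inr ⟨rfl, rfl⟩
  | pull v =>
    obtain ⟨hv, h1⟩ := h1
    obtain ⟨hv', h2⟩ := h2
    rcases h1 with ⟨rfl, rfl⟩ | ⟨rfl, rfl⟩ <;> rcases h2 with ⟨rfl, rfl⟩ | ⟨rfl, rfl⟩ <;> simp
  | clique a b =>
    obtain ⟨_, _, ha, hb, h1⟩ := h1
    obtain ⟨_, _, ha', hb', h2⟩ := h2
    rcases h1 with ⟨rfl, rfl⟩ | ⟨rfl, rfl⟩ <;> rcases h2 with ⟨rfl, rfl⟩ | ⟨rfl, rfl⟩ <;> simp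
  | span v =>
    obtain ⟨_, h1⟩ := h1
    obtain ⟨_, h2⟩ := h2
    rcases h1 with ⟨rfl, rfl⟩ | ⟨rfl, rfl⟩ <;> rcases h2 with ⟨rfl, rfl⟩ | ⟨rfl, rfl⟩ <;> simp

/-- heavy edges: length `h` -/
def isHeavy {V : Type*} : RedEdge V → Bool
  | RedEdge.pull _ => true
  | RedEdge.span _ => true
  | _ => false

@[simp] lemma isHeavy_fe {V : Type*} (e : Sym2 V) : isHeavy (RedEdge.fe e) = false := rfl
@[simp] lemma isHeavy_pull {V : Type*} (v : V) : isHeavy (RedEdge.pull v) = true := rfl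
@[simp] lemma isHeavy_clique {V : Type*} (a b : V) : isHeavy (RedEdge.clique a b) = false := rfl
@[simp] lemma isHeavy_span {V : Type*} (v : V) : isHeavy (RedEdge.span v) = true := rfl

lemma heavy_sum (h : ℝ) (L : List (RedEdge V)) :
    (L.map (redLen h)).sum = (L.countP isHeavy : ℕ) * h := by
  induction L with
  | nil => simp
  | cons e es ih =>
    cases e <;> simp [redLen, isHeavy, List.countP_cons, ih] <;> push_cast <;> ring

end Aux

section Aux2

variable {V : Type*} {k : ℕ} {F : SimpleGraph V} {r : V} {g : Fin k → Finset V}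
  {T : Finset (RedEdge V)}

lemma redwalk_isLeft {x y : RedVert g} {L : List (RedEdge V)}
    (hw : RedWalk F r g T x y L) (hc : L.countP isHeavy = 0) : x.isLeft = y.isLeft := by
  induction hw with
  | nil => rfl
  | cons he hs hrest ih =>
    rename_i x z y e es
    rw [List.countP_cons] at hc
    cases e with
    | fe e0 =>
      obtain ⟨u, v, _, _, rfl, rfl⟩ := hs
      simpa using ih (by omega)
    | pull v => simp [isHeavy] at hc
    | span v => simp [isHeavy] at hc
    | clique a b =>
      obtain ⟨_, _, ha, hb, hcase⟩ := hs
      rcases hcase with ⟨rfl, rfl⟩ | ⟨rfl, rfl⟩ <;> simpa using ih (by omega)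

lemma same_group (hdisj : ∀ i j, i ≠ j → Disjoint (g i) (g j)) {w : V} {i j : Fin k}
    (hi : w ∈ g i) (hj : w ∈ g j) : i = j := by
  by_contra hne
  exact Finset.disjoint_left.mp (hdisj i j hne) hi hj

lemma redwalk_inr_group (hdisj : ∀ i j, i ≠ j → Disjoint (g i) (g j))
    {x y : RedVert g} {L : List (RedEdge V)}
    (hw : RedWalk F r g T x y L) (hc : L.countP isHeavy = 0) :
    ∀ (a : V) (ha : InGroup g a) (v : V) (hv : InGroup g v),
      x = Sum.inr ⟨a, ha⟩ → y = Sum.inr ⟨v, hv⟩ → ∃ i, a ∈ g i ∧ v ∈ g i := by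
  induction hw with
  | nil =>
    intro a ha v hv hx hy
    rw [hx] at hy
    obtain ⟨rfl, -⟩ := Subtype.mk_eq_mk.mp (Sum.inr.inj hy)
    obtain ⟨i, hi⟩ := ha
    exact ⟨i, hi, hi⟩
  | cons he hs hrest ih =>
    rename_i x z y e es
    intro a ha v hv hx hy
    rw [List.countP_cons] at hc
    cases e with
    | fe e0 =>
      obtain ⟨u, w, _, _, rfl, rfl⟩ := hs
      simp at hx
    | pull w => simp [isHeavy] at hc
    | span w => simp [isHeavy] at hc
    | clique a' b' =>
      obtain ⟨hne', ⟨i0, ha', hb'⟩, hA, hB, hcase⟩ := hs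
      rcases hcase with ⟨hx1, rfl⟩ | ⟨hx1, rfl⟩
      · rw [hx] at hx1
        obtain ⟨rfl, -⟩ := Subtype.mk_eq_mk.mp (Sum.inr.inj hx1)
        obtain ⟨iG, h1, h2⟩ := ih (by omega) b' hB v hv rfl hy
        exact ⟨i0, ha', (same_group hdisj hb' h1 ▸ h2 : v ∈ g i0)⟩
      · rw [hx] at hx1
        obtain ⟨rfl, -⟩ := Subtype.mk_eq_mk.mp (Sum.inr.inj hx1)
        obtain ⟨iG, h1, h2⟩ := ih (by omega) a' hA v hv rfl hy
        exact ⟨i0, hb', (same_group hdisj ha' h1 ▸ h2 : v ∈ g i0)⟩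

lemma redwalk_extract (hdisj : ∀ i j, i ≠ j → Disjoint (g i) (g j))
    {x y : RedVert g} {L : List (RedEdge V)}
    (hw : RedWalk F r g T x y L) :
    ∀ (u : V) (v : V) (hv : InGroup g v), L.countP isHeavy ≤ 1 →
      x = Sum.inl u → y = Sum.inr ⟨v, hv⟩ →
      ∃ u' i, u' ∈ g i ∧ v ∈ g i ∧ ∃ p : F.Walk u u', ∀ e ∈ p.edges, RedEdge.fe e ∈ T := by
  induction hw with
  | nil =>
    intro u v hv _ hx hy
    rw [hx] at hy
    simp at hy
  | cons he hs hrest ih =>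
    rename_i x z y e es
    intro u v hv hc hx hy
    subst hx
    rw [List.countP_cons] at hc
    cases e with
    | fe e0 =>
      obtain ⟨a, b, hadj, rfl, hxa, rfl⟩ := hs
      obtain rfl : u = a := Sum.inl.inj hxa
      obtain ⟨u', i, h1, h2, p, hp⟩ := ih b v hv (by simp at hc ⊢; omega) rfl hy
      refine ⟨u', i, h1, h2, SimpleGraph.Walk.cons hadj p, ?_⟩
      intro e' he'
      rw [SimpleGraph.Walk.edges_cons] at he'
      rcases List.mem_cons.mp he' with rfl | hmem
      · exact he
      · exact hp e' hmem
    | pull w =>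
      obtain ⟨hw', hcase⟩ := hs
      rcases hcase with ⟨hx1, rfl⟩ | ⟨hx1, -⟩
      · obtain rfl : u = w := Sum.inl.inj hx1
        have hces : es.countP isHeavy = 0 := by simp at hc; simpa [List.countP_eq_zero] using hc
        obtain ⟨i, h1, h2⟩ := redwalk_inr_group hdisj hrest hces u hw' v hv rfl hy
        exact ⟨u, i, h1, h2, SimpleGraph.Walk.nil, by simp⟩
      · simp at hx1
    | clique a b =>
      obtain ⟨-, -, ha, hb, hcase⟩ := hs
      rcases hcase with ⟨hx1, -⟩ | ⟨hx1, -⟩ <;> simp at hx1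
    | span w =>
      obtain ⟨-, hcase⟩ := hs
      have hces : es.countP isHeavy = 0 := by simp at hc; simpa [List.countP_eq_zero] using hc
      have hleft := redwalk_isLeft hrest hces
      rcases hcase with ⟨-, rfl⟩ | ⟨-, rfl⟩ <;> rw [hy] at hleft <;> simp at hleft

end Aux2

lemma forest_cover {V : Type*} [Fintype V] [DecidableEq V] (r : V) :
    ∀ (S : Finset (Sym2 V)), (∀ e ∈ S, ¬ e.IsDiag) →
    (SimpleGraph.fromEdgeSet (↑S : Set (Sym2 V))).IsAcyclic →
    ∃ D : Finset V, r ∉ D ∧ D.card + S.card = Fintype.card V - 1 ∧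
      ∀ v : V, ∃ w, (w = r ∨ w ∈ D) ∧
        (SimpleGraph.fromEdgeSet (↑S : Set (Sym2 V))).Reachable w v := by
  intro S
  induction S using Finset.induction_on with
  | empty =>
    intro _ _
    refine ⟨Finset.univ.erase r, by simp, ?_, ?_⟩
    · simp [Finset.card_erase_of_mem]
    · intro v
      by_cases hv : v = r
      · exact ⟨r, Or.inl rfl, hv ▸ Reachable.refl v⟩
      · exact ⟨v, Or.inr (Finset.mem_erase.mpr ⟨hv, Finset.mem_univ v⟩), Reachable.refl v⟩
  | @insert e S' henotin ih =>
    induction e using Sym2.ind with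
    | _ a b =>
      intro hdiag hac
      have hab : a ≠ b := by
        intro hEq
        exact hdiag _ (Finset.mem_insert_self _ _) (by simp [hEq])
      set big := SimpleGraph.fromEdgeSet (↑(insert s(a, b) S') : Set (Sym2 V)) with hbig
      set small := SimpleGraph.fromEdgeSet (↑S' : Set (Sym2 V)) with hsmall
      have hle : small ≤ big := by
        apply SimpleGraph.fromEdgeSet_mono
        exact_mod_cast Finset.subset_insert _ _
      have hsmallac : small.IsAcyclic := fun v c hc => hac (c.mapLe hle) (hc.mapLe hle)
      obtain ⟨D', hrD', hcard', hcov'⟩ :=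
        ih (fun e he => hdiag e (Finset.mem_insert_of_mem he)) hsmallac
      have hAdj : big.Adj a b := by
        rw [hbig, SimpleGraph.fromEdgeSet_adj]
        exact ⟨by simp, hab⟩
      have hbridge := (isAcyclic_iff_forall_adj_isBridge.mp hac) hAdj
      have hnr : ¬ small.Reachable a b := by
        intro hr
        have hnreach := SimpleGraph.isBridge_iff.mp hbridge
        apply hnreach
        refine hr.mono ?_
        intro u v huv
        rw [hsmall, SimpleGraph.fromEdgeSet_adj] at huv
        refine ⟨hle (by rw [hsmall, SimpleGraph.fromEdgeSet_adj]; exact huv), ?_⟩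
        rw [SimpleGraph.fromEdgeSet_adj]
        rintro ⟨hEq, -⟩
        rw [Set.mem_singleton_iff] at hEq
        exact henotin (hEq ▸ huv.1)
      obtain ⟨wa, hwa, hra⟩ := hcov' a
      obtain ⟨wb, hwb, hrb⟩ := hcov' b
      have hwane : wa ≠ wb := fun hEq => hnr (hra.symm.trans (hEq ▸ hrb))
      have hD'pos : ∀ w ∈ D', 1 ≤ D'.card := fun w hw => Finset.card_pos.mpr ⟨w, hw⟩
      have hcardins : (insert s(a, b) S').card = S'.card + 1 :=
        Finset.card_insert_of_notMem henotin
      have key : ∀ (c d wc wd : V), big.Adj c d → (wc = r ∨ wc ∈ D') → wd ∈ D' →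
          small.Reachable wc c → small.Reachable wd d → wc ≠ wd →
          ∃ D : Finset V, r ∉ D ∧ D.card + (insert s(a, b) S').card = Fintype.card V - 1 ∧
            ∀ v : V, ∃ w, (w = r ∨ w ∈ D) ∧ big.Reachable w v := by
        intro c d wc wd hcd hwc hwdD hrc hrd hwcwd
        refine ⟨D'.erase wd, fun hr => hrD' (Finset.mem_of_mem_erase hr), ?_, ?_⟩
        · rw [Finset.card_erase_of_mem hwdD, hcardins]
          have := hD'pos wd hwdD
          omega
        · intro v
          obtain ⟨w, hw, hrw⟩ := hcov' v
          by_cases hwwd : w = wd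
          · refine ⟨wc, ?_, ?_⟩
            · rcases hwc with rfl | hwc'
              · exact Or.inl rfl
              · exact Or.inr (Finset.mem_erase.mpr ⟨hwcwd, hwc'⟩)
            · exact ((hrc.mono hle).trans (hcd.reachable.trans
                (((hrd.mono hle).symm).trans ((hwwd ▸ hrw).mono hle))))
          · refine ⟨w, ?_, hrw.mono hle⟩
            rcases hw with rfl | hw'
            · exact Or.inl rfl
            · exact Or.inr (Finset.mem_erase.mpr ⟨hwwd, hw'⟩)
      by_cases hwbr : wb = r
      · have hwaD : wa ∈ D' := by
          rcases hwa with rfl | h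
          · exact absurd hwbr (Ne.symm hwane)
          · exact h
        exact key b a wb wa hAdj.symm (Or.inl hwbr) hwaD hrb hra (Ne.symm hwane)
      · have hwbD : wb ∈ D' := by
          rcases hwb with rfl | h
          · exact absurd rfl hwbr
          · exact h
        exact key a b wa wb hAdj hwa hwbD hra hrb hwane

/-- Exactness of the group Steiner tree → length-constrained MST reduction.
Forward: any spanning tree of the constructed graph `G` (a set of `|V(G)| - 1` edges from
which every vertex is reachable from the root within length `h`) yields a subgraph of `F`
connecting `r` to at least one vertex of every group, of the same weight. Converse: every
(acyclic) group Steiner solution in `F` extends to a feasible `h`-length spanning tree of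
the constructed graph of the same weight. -/
theorem stmt10 {V : Type*} [Fintype V] [DecidableEq V] {k : ℕ}
    (F : SimpleGraph V) (r : V) (wF : Sym2 V → ℝ) (hwF : ∀ e, 0 ≤ wF e)
    (g : Fin k → Finset V)
    (hdisj : ∀ i j, i ≠ j → Disjoint (g i) (g j))
    (hne : ∀ i, (g i).Nonempty)
    (h : ℝ) (hh : 0 < h) :
    (∀ T : Finset (RedEdge V),
      T.card = Fintype.card (RedVert g) - 1 →
      (∀ x : RedVert g, ∃ L, RedWalk F r g T (Sum.inl r) x L ∧
        (L.map (redLen h)).sum ≤ h) →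
      ∃ S : Finset (Sym2 V), ↑S ⊆ F.edgeSet ∧
        (∀ i, ∃ v ∈ g i, ∃ p : F.Walk r v, ∀ e ∈ p.edges, e ∈ S) ∧
        ∑ e ∈ S, wF e = ∑ e ∈ T, redWt wF e)
    ∧
    (∀ S : Finset (Sym2 V), ↑S ⊆ F.edgeSet →
      (SimpleGraph.fromEdgeSet (↑S : Set (Sym2 V))).IsAcyclic →
      (∀ i, ∃ v ∈ g i, ∃ p : F.Walk r v, ∀ e ∈ p.edges, e ∈ S) →
      ∃ T : Finset (RedEdge V),
        T.card = Fintype.card (RedVert g) - 1 ∧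
        (∀ x : RedVert g, ∃ L, RedWalk F r g T (Sum.inl r) x L ∧
          (L.map (redLen h)).sum ≤ h) ∧
        ∑ e ∈ T, redWt wF e = ∑ e ∈ S, wF e) := by
  classical
  constructor
  · -- forward
    intro T hcard hreach
    set S : Finset (Sym2 V) := Finset.univ.filter (fun e => RedEdge.fe e ∈ T) with hSdef
    have hP : ∀ x : RedVert g, ∃ n : ℕ, ∃ L,
        RedWalk F r g T (Sum.inl r) x L ∧ L.length = n := by
      intro x
      obtain ⟨L, hL, -⟩ := hreach x
      exact ⟨L.length, L, hL, rfl⟩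
    set d : RedVert g → ℕ := fun x => Nat.find (hP x) with hd
    have key : ∀ x : RedVert g, x ≠ Sum.inl r →
        ∃ e z, e ∈ T ∧ RedStep F r g e z x ∧ d z < d x := by
      intro x hx
      obtain ⟨L, hL, hlen⟩ := Nat.find_spec (hP x)
      have hLne : L ≠ [] := by
        rintro rfl
        exact hx (redwalk_nil_eq hL).symm
      obtain ⟨z, e, L', rfl, hw', he, hs⟩ := redwalk_concat hL hLne
      refine ⟨e, z, he, hs, ?_⟩
      have h1 : d z ≤ L'.length := Nat.find_min' (hP z) ⟨L', hw', rfl⟩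
      have h2 : L'.length + 1 = d x := by simpa using hlen
      omega
    set f : RedVert g → RedEdge V :=
      fun x => if hx : x ≠ Sum.inl r then (key x hx).choose else RedEdge.pull r with hf
    have hfspec : ∀ x (hx : x ≠ Sum.inl r),
        f x ∈ T ∧ ∃ z, RedStep F r g (f x) z x ∧ d z < d x := by
      intro x hx
      rw [hf]
      simp only [dif_pos hx]
      obtain ⟨z, h1, h2, h3⟩ := (key x hx).choose_spec
      exact ⟨h1, z, h2, h3⟩
    set A : Finset (RedVert g) := Finset.univ.erase (Sum.inl r) with hA
    have hinj : Set.InjOn f ↑A := by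
      intro x1 h1 x2 h2 heq
      by_contra hne12
      have hx1 : x1 ≠ Sum.inl r := (Finset.mem_erase.mp (Finset.mem_coe.mp h1)).1
      have hx2 : x2 ≠ Sum.inl r := (Finset.mem_erase.mp (Finset.mem_coe.mp h2)).1
      obtain ⟨-, z1, hs1, hd1⟩ := hfspec x1 hx1
      obtain ⟨-, z2, hs2, hd2⟩ := hfspec x2 hx2
      rw [heq] at hs1
      rcases redstep_pair hs2 hs1 with ⟨rfl, rfl⟩ | ⟨rfl, rfl⟩
      · exact hne12 rfl
      · omega
    have hsub : A.image f ⊆ T := by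
      intro e he
      obtain ⟨x, hx, rfl⟩ := Finset.mem_image.mp he
      exact (hfspec x (Finset.mem_erase.mp hx).1).1
    have himg : A.image f = T := by
      apply Finset.eq_of_subset_of_card_le hsub
      rw [hcard, Finset.card_image_of_injOn hinj, hA,
        Finset.card_erase_of_mem (Finset.mem_univ _), Finset.card_univ]
    have husable : ∀ e ∈ T, ∃ a b, RedStep F r g e a b := by
      intro e he
      rw [← himg] at he
      obtain ⟨x, hx, rfl⟩ := Finset.mem_image.mp he
      obtain ⟨-, z, hs, -⟩ := hfspec x (Finset.mem_erase.mp hx).1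
      exact ⟨z, x, hs⟩
    refine ⟨S, ?_, ?_, ?_⟩
    · intro e heS
      have heT : RedEdge.fe e ∈ T := by
        rw [Finset.mem_coe, hSdef, Finset.mem_filter] at heS
        exact heS.2
      obtain ⟨a, b, hs⟩ := husable _ heT
      obtain ⟨u, v, hadj, rfl, -, -⟩ := hs
      exact F.mem_edgeSet.mpr hadj
    · intro i
      obtain ⟨v0, hv0⟩ := hne i
      have hvg : InGroup g v0 := ⟨i, hv0⟩
      obtain ⟨L, hL, hsum⟩ := hreach (Sum.inr ⟨v0, hvg⟩)
      have hcount : L.countP isHeavy ≤ 1 := by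
        rw [heavy_sum h] at hsum
        by_contra hgt
        push_neg at hgt
        have h2 : (2 : ℝ) ≤ (L.countP isHeavy : ℕ) := by exact_mod_cast hgt
        nlinarith
      obtain ⟨u', iG, hu', hviG, p, hp⟩ :=
        redwalk_extract hdisj hL r v0 hvg hcount rfl rfl
      have hiG : iG = i := same_group hdisj hviG hv0
      refine ⟨u', hiG ▸ hu', p, ?_⟩
      intro e he'
      rw [hSdef, Finset.mem_filter]
      exact ⟨Finset.mem_univ _, hp e he'⟩
    · -- sum equality
      have h1 : ∑ e ∈ T, redWt wF e
          = ∑ e ∈ T.filter (fun e => ∃ e0, e = RedEdge.fe e0), redWt wF e := by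
        symm
        apply Finset.sum_filter_of_ne
        intro e _ hne0
        cases e with
        | fe e0 => exact ⟨e0, rfl⟩
        | pull _ => exact absurd rfl hne0
        | clique _ _ => exact absurd rfl hne0
        | span _ => exact absurd rfl hne0
      rw [h1]
      apply Finset.sum_bij (fun (e : Sym2 V) _ => RedEdge.fe e)
      · intro e he
        rw [hSdef, Finset.mem_filter] at he
        exact Finset.mem_filter.mpr ⟨he.2, e, rfl⟩
      · intro e1 h1' e2 h2' heq
        injection heq
      · intro e' he'
        obtain ⟨heT, e0, rfl⟩ := Finset.mem_filter.mp he'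
        exact ⟨e0, by rw [hSdef, Finset.mem_filter]; exact ⟨Finset.mem_univ _, heT⟩, rfl⟩
      · intro e _
        rfl
  · -- converse
    intro S hS hacyc hgroups
    choose v0 hv0 pgrp hpgrp using hgroups
    obtain ⟨D, hrD, hcardD, hcover⟩ := forest_cover r S
      (fun e he => SimpleGraph.not_isDiag_of_mem_edgeSet F (hS he)) hacyc
    set idx : {v : V // InGroup g v} → Fin k := fun w => w.2.choose with hidxdef
    have hidx : ∀ w : {v : V // InGroup g v}, w.1 ∈ g (idx w) := fun w => w.2.choose_spec
    set φ : {v : V // InGroup g v} → RedEdge V := fun w =>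
      if w.1 = v0 (idx w) then RedEdge.pull w.1 else RedEdge.clique (v0 (idx w)) w.1 with hφ
    have hφinj : Function.Injective φ := by
      intro w w' heq
      rw [hφ] at heq
      simp only at heq
      split_ifs at heq <;>
        first
          | exact Subtype.ext (by injection heq)
          | exact Subtype.ext (by injection heq with h1 h2; exact h2)
          | simp at heq
    set T : Finset (RedEdge V) :=
      (S.image RedEdge.fe ∪ D.image RedEdge.span) ∪ Finset.univ.image φ with hT
    -- membership helpers
    have hfeT : ∀ e ∈ S, RedEdge.fe e ∈ T := fun e he =>
      Finset.mem_union_left _ (Finset.mem_union_left _ (Finset.mem_image_of_mem _ he))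
    have hspanT : ∀ v ∈ D, RedEdge.span v ∈ T := fun v hv =>
      Finset.mem_union_left _ (Finset.mem_union_right _ (Finset.mem_image_of_mem _ hv))
    have hφT : ∀ w, φ w ∈ T := fun w =>
      Finset.mem_union_right _ (Finset.mem_image_of_mem _ (Finset.mem_univ w))
    -- pull edges of representatives are in T
    have hpullT : ∀ i : Fin k, RedEdge.pull (v0 i) ∈ T := by
      intro i
      have hg : InGroup g (v0 i) := ⟨i, hv0 i⟩
      have hsame : idx ⟨v0 i, hg⟩ = i := same_group hdisj (hidx ⟨v0 i, hg⟩) (hv0 i)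
      have : φ ⟨v0 i, hg⟩ = RedEdge.pull (v0 i) := by
        rw [hφ]
        simp [hsame]
      exact this ▸ hφT ⟨v0 i, hg⟩
    -- disjointness of the three pieces
    have hd1 : Disjoint (S.image RedEdge.fe) (D.image RedEdge.span) := by
      rw [Finset.disjoint_left]
      rintro e he1 he2
      obtain ⟨a, -, rfl⟩ := Finset.mem_image.mp he1
      obtain ⟨b, -, hb⟩ := Finset.mem_image.mp he2
      cases hb
    have hd2 : Disjoint (S.image RedEdge.fe ∪ D.image RedEdge.span)
        (Finset.univ.image φ) := by
      rw [Finset.disjoint_left]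
      rintro e he1 he2
      obtain ⟨w, -, rfl⟩ := Finset.mem_image.mp he2
      rcases Finset.mem_union.mp he1 with hmem | hmem
      · obtain ⟨a, -, ha⟩ := Finset.mem_image.mp hmem
        rw [hφ] at ha
        simp only at ha
        split_ifs at ha <;> cases ha
      · obtain ⟨a, -, ha⟩ := Finset.mem_image.mp hmem
        rw [hφ] at ha
        simp only at ha
        split_ifs at ha <;> cases ha
    -- cardinality
    have hVpos : 1 ≤ Fintype.card V := Fintype.card_pos_iff.mpr ⟨r⟩
    have hcardT : T.card = Fintype.card (RedVert g) - 1 := by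
      rw [hT, Finset.card_union_of_disjoint hd2, Finset.card_union_of_disjoint hd1,
        Finset.card_image_of_injective _ (fun a b hab => by injection hab),
        Finset.card_image_of_injective _ (fun a b hab => by injection hab),
        Finset.card_image_of_injective _ hφinj, Finset.card_univ,
        Fintype.card_sum]
      omega
    -- walks within F-edges of S
    have walkS : ∀ {a b : V}, (SimpleGraph.fromEdgeSet (↑S : Set (Sym2 V))).Walk a b →
        ∃ L, RedWalk F r g T (Sum.inl a) (Sum.inl b) L ∧ (L.map (redLen h)).sum = 0 := by
      intro a b p
      induction p with
      | nil => exact ⟨[], RedWalk.nil _, by simp⟩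
      | @cons a c b hadj p ih =>
        obtain ⟨L', hL', hsum'⟩ := ih
        obtain ⟨hmem, hne'⟩ := (SimpleGraph.fromEdgeSet_adj _).mp hadj
        have hmemS : s(a, c) ∈ S := hmem
        have hadjF : F.Adj a c := F.mem_edgeSet.mp (hS hmemS)
        refine ⟨RedEdge.fe s(a, c) :: L', RedWalk.cons (hfeT _ hmemS)
          ⟨a, c, hadjF, rfl, rfl, rfl⟩ hL', by simp [redLen, hsum']⟩
    have walkF : ∀ {a b : V} (p : F.Walk a b), (∀ e ∈ p.edges, e ∈ S) →
        ∃ L, RedWalk F r g T (Sum.inl a) (Sum.inl b) L ∧ (L.map (redLen h)).sum = 0 := by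
      intro a b p
      induction p with
      | nil => exact fun _ => ⟨[], RedWalk.nil _, by simp⟩
      | @cons a c b hadj p ih =>
        intro hp
        obtain ⟨L', hL', hsum'⟩ := ih (fun e he => hp e (by simp [he]))
        have hmemS : s(a, c) ∈ S := hp _ (by simp)
        exact ⟨RedEdge.fe s(a, c) :: L', RedWalk.cons (hfeT _ hmemS)
          ⟨a, c, hadj, rfl, rfl, rfl⟩ hL', by simp [redLen, hsum']⟩
    refine ⟨T, hcardT, ?_, ?_⟩
    · -- reachability
      intro x
      cases x with
      | inl u =>
        obtain ⟨w, hw, hrw⟩ := hcover u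
        obtain ⟨q⟩ := hrw
        obtain ⟨L, hL, hsum⟩ := walkS q
        rcases hw with rfl | hwD
        · exact ⟨L, hL, by rw [hsum]; exact hh.le⟩
        · have hwr : w ≠ r := fun hEq => hrD (hEq ▸ hwD)
          refine ⟨RedEdge.span w :: L, RedWalk.cons (hspanT w hwD)
            ⟨hwr, Or.inl ⟨rfl, rfl⟩⟩ hL, ?_⟩
          simp [redLen, hsum]
      | inr w =>
        obtain ⟨u, hu⟩ := w
        set i : Fin k := idx ⟨u, hu⟩ with hi
        have hugi : u ∈ g i := hidx ⟨u, hu⟩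
        have hgi : InGroup g (v0 i) := ⟨i, hv0 i⟩
        obtain ⟨L1, hL1, hsum1⟩ := walkF (pgrp i) (hpgrp i)
        have hsteppull : RedStep F r g (RedEdge.pull (v0 i))
            (Sum.inl (v0 i)) (Sum.inr ⟨v0 i, hgi⟩) := ⟨hgi, Or.inl ⟨rfl, rfl⟩⟩
        by_cases hcase : u = v0 i
        · have hEq : (Sum.inr ⟨u, hu⟩ : RedVert g) = Sum.inr ⟨v0 i, hgi⟩ :=
            congrArg Sum.inr (Subtype.ext hcase)
          refine ⟨L1 ++ [RedEdge.pull (v0 i)], ?_, ?_⟩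
          · rw [hEq]
            exact redwalk_append hL1
              (RedWalk.cons (hpullT i) hsteppull (RedWalk.nil _))
          · simp [redLen, hsum1]
        · have hφw : φ (⟨u, hu⟩ : {v : V // InGroup g v}) = RedEdge.clique (v0 i) u := by
            rw [hφ]
            simp only [← hi, if_neg hcase]
          have hcliqueT : RedEdge.clique (v0 i) u ∈ T := hφw ▸ hφT ⟨u, hu⟩
          have hstepclique : RedStep F r g (RedEdge.clique (v0 i) u)
              (Sum.inr ⟨v0 i, hgi⟩) (Sum.inr ⟨u, hu⟩) :=
            ⟨fun hEq => hcase hEq.symm, ⟨i, hv0 i, hugi⟩, hgi, hu, Or.inl ⟨rfl, rfl⟩⟩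
          refine ⟨L1 ++ [RedEdge.pull (v0 i), RedEdge.clique (v0 i) u],
            redwalk_append hL1 (RedWalk.cons (hpullT i) hsteppull
              (RedWalk.cons hcliqueT hstepclique (RedWalk.nil _))), ?_⟩
          simp [redLen, hsum1]
    · -- weights
      rw [hT, Finset.sum_union hd2, Finset.sum_union hd1]
      have hz1 : ∑ e ∈ D.image RedEdge.span, redWt wF e = 0 := by
        apply Finset.sum_eq_zero
        intro e he
        obtain ⟨a, -, rfl⟩ := Finset.mem_image.mp he
        rfl
      have hz2 : ∑ e ∈ Finset.univ.image φ, redWt wF e = 0 := by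
        apply Finset.sum_eq_zero
        intro e he
        obtain ⟨w, -, rfl⟩ := Finset.mem_image.mp he
        rw [hφ]
        simp only
        split_ifs <;> rfl
      rw [hz1, hz2, Finset.sum_image (fun a _ b _ hab => by injection hab)]
      simp [redWt]
end
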